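/- Every Boolean algebra has the FCLP, i.e., for every Boolean algebra B and every congruence θ of B, the Boolean morphism FC(θ) : FC(B) → FC(B/θ), φ ↦ (φ ∨ θ)/θ, is surjective. -/

import Mathlib

/-! Universal-algebra framework: algebras over a signature, congruences,
factor congruences, lifting properties. -/

structure Signature where
  ops : Type
  arity : ops → ℕ

structure Alg (σ : Signature) where
  carrier : Type
  interp : ∀ f : σ.ops, (Fin (σ.arity f) → carrier) → carrier

namespace Alg

variable {σ : Signature}

/-- A congruence: an equivalence relation compatible with all operations. -/
def IsCon (A : Alg σ) (r : A.carrier → A.carrier → Prop) : Prop :=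
  Equivalence r ∧
    ∀ (f : σ.ops) (x y : Fin (σ.arity f) → A.carrier),
      (∀ i, r (x i) (y i)) → r (A.interp f x) (A.interp f y)

/-- The least congruence `Δ_A`. -/
def delta (A : Alg σ) : A.carrier → A.carrier → Prop := fun a b => a = b

/-- The greatest congruence `∇_A = A²`. -/
def nabla (A : Alg σ) : A.carrier → A.carrier → Prop := fun _ _ => True

/-- Meet (intersection) of congruences. -/
def conMeet (A : Alg σ) (r s : A.carrier → A.carrier → Prop) :
    A.carrier → A.carrier → Prop := fun a b => r a b ∧ s a b

/-- Join of congruences: the least congruence containing both. -/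
def conJoin (A : Alg σ) (r s : A.carrier → A.carrier → Prop) :
    A.carrier → A.carrier → Prop := fun a b =>
  ∀ t, A.IsCon t → (∀ x y, r x y → t x y) → (∀ x y, s x y → t x y) → t a b

/-- The congruence generated by a set of pairs. -/
def conGen (A : Alg σ) (X : Set (A.carrier × A.carrier)) :
    A.carrier → A.carrier → Prop := fun a b =>
  ∀ t, A.IsCon t → (∀ p ∈ X, t p.1 p.2) → t a b

/-- Composition of relations: `(a,b) ∈ comp r s` iff `(a,x) ∈ s` and `(x,b) ∈ r`
for some `x`. -/
def comp (A : Alg σ) (r s : A.carrier → A.carrier → Prop) :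
    A.carrier → A.carrier → Prop := fun a b => ∃ x, s a x ∧ r x b

/-- Factor congruences: congruences `φ` having a congruence `φ*` with
`φ ∨ φ* = ∇`, `φ ∩ φ* = Δ` and `φ ∘ φ* = φ* ∘ φ`. -/
def IsFC (A : Alg σ) (φ : A.carrier → A.carrier → Prop) : Prop :=
  A.IsCon φ ∧ ∃ ψ, A.IsCon ψ ∧ A.conJoin φ ψ = A.nabla ∧
    A.conMeet φ ψ = A.delta ∧ A.comp φ ψ = A.comp ψ φ

/-- Boolean congruences: complemented elements of the lattice `Con(A)`. -/
def IsBooleanCon (A : Alg σ) (φ : A.carrier → A.carrier → Prop) : Prop :=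
  A.IsCon φ ∧ ∃ ψ, A.IsCon ψ ∧ A.conJoin φ ψ = A.nabla ∧ A.conMeet φ ψ = A.delta

/-- `A` is congruence-distributive iff the lattice `Con(A)` is distributive. -/
def CongDistrib (A : Alg σ) : Prop :=
  ∀ r s t, A.IsCon r → A.IsCon s → A.IsCon t →
    A.conMeet r (A.conJoin s t) = A.conJoin (A.conMeet r s) (A.conMeet r t)

/-- `A` is congruence-permutable iff all congruences permute under composition. -/
def CongPermutable (A : Alg σ) : Prop :=
  ∀ r s, A.IsCon r → A.IsCon s → A.comp r s = A.comp s r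

/-- Arithmetical = congruence-distributive + congruence-permutable. -/
def Arithmetical (A : Alg σ) : Prop := A.CongDistrib ∧ A.CongPermutable

/-- The quotient algebra `A/θ`. -/
noncomputable def quotAlg (A : Alg σ) (θ : A.carrier → A.carrier → Prop) :
    Alg σ where
  carrier := Quot θ
  interp f x := Quot.mk θ (A.interp f fun i => (x i).out)

/-- The image `α/θ = {(a/θ, b/θ) : (a,b) ∈ α}` of a relation in the quotient. -/
def quotRel (A : Alg σ) (θ α : A.carrier → A.carrier → Prop) :
    Quot θ → Quot θ → Prop := fun x y =>
  ∃ a b, x = Quot.mk θ a ∧ y = Quot.mk θ b ∧ α a b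

/-- `θ` has the Factor Congruence Lifting Property: the Boolean morphism
`FC(θ) : FC(A) → FC(A/θ)`, `ψ ↦ (ψ ∨ θ)/θ`, is surjective. -/
def HasFCLP (A : Alg σ) (θ : A.carrier → A.carrier → Prop) : Prop :=
  ∀ γ, (A.quotAlg θ).IsFC γ →
    ∃ ψ, A.IsFC ψ ∧ A.quotRel θ (A.conJoin ψ θ) = γ

/-- `θ` has the Congruence Boolean Lifting Property: the Boolean morphism
`B(Con(A)) → B(Con(A/θ))`, `ψ ↦ (ψ ∨ θ)/θ`, is surjective. -/
def HasCBLP (A : Alg σ) (θ : A.carrier → A.carrier → Prop) : Prop :=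
  ∀ γ, (A.quotAlg θ).IsBooleanCon γ →
    ∃ ψ, A.IsBooleanCon ψ ∧ A.quotRel θ (A.conJoin ψ θ) = γ

/-- `A` has FCLP iff every congruence of `A` has FCLP. -/
def AlgFCLP (A : Alg σ) : Prop := ∀ θ, A.IsCon θ → A.HasFCLP θ

/-- `A` has CBLP iff every congruence of `A` has CBLP. -/
def AlgCBLP (A : Alg σ) : Prop := ∀ θ, A.IsCon θ → A.HasCBLP θ

/-- FC-normality. -/
def FCNormal (A : Alg σ) : Prop :=
  ∀ φ ψ, A.IsCon φ → A.IsCon ψ → A.comp φ ψ = A.nabla →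
    ∃ α β, A.IsFC α ∧ A.IsFC β ∧ A.conMeet α β = A.delta ∧
      A.comp φ α = A.nabla ∧ A.comp ψ β = A.nabla

/-- B-normality. -/
def BNormal (A : Alg σ) : Prop :=
  ∀ φ ψ, A.IsCon φ → A.IsCon ψ → A.conJoin φ ψ = A.nabla →
    ∃ α β, A.IsBooleanCon α ∧ A.IsBooleanCon β ∧ A.conMeet α β = A.delta ∧
      A.conJoin φ α = A.nabla ∧ A.conJoin ψ β = A.nabla

/-- Isomorphism of algebras. -/
def Iso (A B : Alg σ) : Prop :=
  ∃ e : A.carrier ≃ B.carrier,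
    ∀ (f : σ.ops) (x : Fin (σ.arity f) → A.carrier),
      e (A.interp f x) = B.interp f fun i => e (x i)

/-- Direct product of a finite family of algebras. -/
def prodAlg {n : ℕ} (B : Fin n → Alg σ) : Alg σ where
  carrier := ∀ i, (B i).carrier
  interp f x := fun i => (B i).interp f fun j => x j i

/-- The product congruence `θ₁ × … × θₙ`. -/
def prodRel {n : ℕ} (B : Fin n → Alg σ)
    (θ : ∀ i, (B i).carrier → (B i).carrier → Prop) :
    (prodAlg B).carrier → (prodAlg B).carrier → Prop :=
  fun x y => ∀ i, θ i (x i) (y i)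

/-- Maximal congruences: maximal elements of `(Con(A) \ {∇}, ⊆)`. -/
def IsMaxCon (A : Alg σ) (θ : A.carrier → A.carrier → Prop) : Prop :=
  A.IsCon θ ∧ θ ≠ A.nabla ∧
    ∀ ψ, A.IsCon ψ → ψ ≠ A.nabla → (∀ a b, θ a b → ψ a b) → ψ = θ

/-- Prime congruences. -/
def IsPrimeCon (A : Alg σ) (θ : A.carrier → A.carrier → Prop) : Prop :=
  A.IsCon θ ∧ ∀ α β, A.IsCon α → A.IsCon β →
    (∀ a b, α a b → β a b → θ a b) →
    (∀ a b, α a b → θ a b) ∨ ∀ a b, β a b → θ a b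

end Alg

/-! The signature of Boolean algebras. -/

inductive BoolOp | sup | inf | compl | bot | top

abbrev boolSig : Signature where
  ops := BoolOp
  arity := fun f => match f with
    | .sup => 2 | .inf => 2 | .compl => 1 | .bot => 0 | .top => 0

/-- The algebra over `boolSig` attached to a Boolean algebra. -/
def boolAlg (B : Type) [BooleanAlgebra B] : Alg boolSig where
  carrier := B
  interp := fun f => match f with
    | .sup => fun x => x 0 ⊔ x 1
    | .inf => fun x => x 0 ⊓ x 1
    | .compl => fun x => (x 0)ᶜ
    | .bot => fun _ => ⊥
    | .top => fun _ => ⊤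

section FCLPAuxSect

namespace FCLPAux

open Alg

/-- Composition of two permuting congruences is a congruence. -/
lemma comp_isCon {σ : Signature} {A : Alg σ} {r s : A.carrier → A.carrier → Prop}
    (hr : A.IsCon r) (hs : A.IsCon s) (hperm : A.comp r s = A.comp s r) :
    A.IsCon (A.comp r s) := by
  constructor
  · constructor
    · intro a; exact ⟨a, hs.1.refl a, hr.1.refl a⟩
    · intro a b ⟨x, hax, hxb⟩
      have h1 : A.comp s r b a := ⟨x, hr.1.symm hxb, hs.1.symm hax⟩
      rw [← hperm] at h1; exact h1
    · intro a b c ⟨x, hax, hxb⟩ ⟨y, hby, hyc⟩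
      have h1 : A.comp s r x y := ⟨b, hxb, hby⟩
      rw [← hperm] at h1
      obtain ⟨z, hxz, hzy⟩ := h1
      exact ⟨z, hs.1.trans hax hxz, hr.1.trans hzy hyc⟩
  · intro f x y h
    choose m hm1 hm2 using h
    exact ⟨A.interp f m, hs.2 f x m hm1, hr.2 f m y hm2⟩

/-- If two permuting congruences join to `∇`, their composition is all of `A²`. -/
lemma comp_all {σ : Signature} {A : Alg σ} {r s : A.carrier → A.carrier → Prop}
    (hr : A.IsCon r) (hs : A.IsCon s) (hperm : A.comp r s = A.comp s r)
    (hjoin : A.conJoin r s = A.nabla) : ∀ a b, A.comp r s a b := by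
  intro a b
  have h : A.conJoin r s a b := by rw [hjoin]; trivial
  exact h _ (comp_isCon hr hs hperm)
    (fun x y hxy => ⟨x, hs.1.refl x, hxy⟩)
    (fun x y hxy => ⟨y, hxy, hr.1.refl y⟩)

variable {B : Type} [BooleanAlgebra B] {θ : B → B → Prop}

@[reducible] instance instBAcarrier : BooleanAlgebra ((boolAlg B).carrier) :=
  ‹BooleanAlgebra B›

lemma mk_eq_iff (hθ : (boolAlg B).IsCon θ) {a b : B} :
    Quot.mk θ a = Quot.mk θ b ↔ θ a b := by
  constructor
  · intro h
    exact (hθ.1.eqvGen_iff).mp (Quot.eq.mp h)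
  · exact Quot.sound

lemma out_rel (hθ : (boolAlg B).IsCon θ) (a : B) : θ (Quot.mk θ a).out a :=
  (mk_eq_iff hθ).mp (Quot.out_eq _)

lemma con_sup (hθ : (boolAlg B).IsCon θ) {a b a' b' : B} (h : θ a b) (h' : θ a' b') :
    θ (a ⊔ a') (b ⊔ b') := by
  have := hθ.2 .sup ![a, a'] ![b, b'] (by intro i; fin_cases i <;> simpa)
  simpa [boolAlg] using this

lemma con_inf (hθ : (boolAlg B).IsCon θ) {a b a' b' : B} (h : θ a b) (h' : θ a' b') :
    θ (a ⊓ a') (b ⊓ b') := by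
  have := hθ.2 .inf ![a, a'] ![b, b'] (by intro i; fin_cases i <;> simpa)
  simpa [boolAlg] using this

lemma con_compl (hθ : (boolAlg B).IsCon θ) {a b : B} (h : θ a b) : θ aᶜ bᶜ := by
  have := hθ.2 .compl ![a] ![b] (by intro i; fin_cases i <;> simpa)
  simpa [boolAlg] using this

lemma inf_inf_c (x y c : B) : (x ⊓ c) ⊓ (y ⊓ c) = (x ⊓ y) ⊓ c := by
  rw [inf_inf_inf_comm, inf_idem]

lemma compl_inf_c (x c : B) : xᶜ ⊓ c = (x ⊓ c)ᶜ ⊓ c := by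
  simp [compl_inf, inf_sup_right]

/-- `{(a,b) : θ (a ⊓ c) (b ⊓ c)}` is a congruence whenever `θ` is. -/
lemma rho_con (hθ : (boolAlg B).IsCon θ) (c : B) :
    (boolAlg B).IsCon (fun a b => θ (a ⊓ c) (b ⊓ c)) := by
  refine ⟨⟨fun a => hθ.1.refl _, fun h => hθ.1.symm h, fun h h' => hθ.1.trans h h'⟩, ?_⟩
  intro f x y h
  change Fin _ → B at x y
  cases f with
  | sup =>
      show θ ((x 0 ⊔ x 1) ⊓ c) ((y 0 ⊔ y 1) ⊓ c)
      rw [inf_sup_right, inf_sup_right]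
      exact con_sup hθ (h 0) (h 1)
  | inf =>
      show θ ((x 0 ⊓ x 1) ⊓ c) ((y 0 ⊓ y 1) ⊓ c)
      rw [← inf_inf_c, ← inf_inf_c (y 0 : B)]
      exact con_inf hθ (h 0) (h 1)
  | compl =>
      show θ ((x 0)ᶜ ⊓ c) ((y 0)ᶜ ⊓ c)
      rw [compl_inf_c, compl_inf_c (y 0 : B)]
      exact con_inf hθ (con_compl hθ (h 0)) (hθ.1.refl c)
  | bot => exact hθ.1.refl _
  | top => exact hθ.1.refl _

lemma delta_con : (boolAlg B).IsCon (Alg.delta (boolAlg B)) :=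
  ⟨⟨fun _ => rfl, Eq.symm, Eq.trans⟩, fun f x y h => congrArg _ (funext h)⟩

/-- The factor congruence of `B` attached to `c`. -/
def psi (c : B) : B → B → Prop := fun a b => a ⊓ c = b ⊓ c

lemma psi_con (c : B) : (boolAlg B).IsCon (psi c) :=
  rho_con delta_con c

lemma psi_mid1 (c a b : B) : psi cᶜ a ((a ⊓ cᶜ) ⊔ (b ⊓ c)) := by
  show a ⊓ cᶜ = ((a ⊓ cᶜ) ⊔ (b ⊓ c)) ⊓ cᶜ
  rw [inf_sup_right]
  simp [inf_assoc]

lemma psi_mid2 (c a b : B) : psi c ((a ⊓ cᶜ) ⊔ (b ⊓ c)) b := by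
  show ((a ⊓ cᶜ) ⊔ (b ⊓ c)) ⊓ c = b ⊓ c
  rw [inf_sup_right]
  simp [inf_assoc]

lemma psi_FC (c : B) : (boolAlg B).IsFC (psi c) := by
  refine ⟨psi_con c, psi cᶜ, psi_con cᶜ, ?_, ?_, ?_⟩
  · funext a b
    change B at a b
    apply propext
    refine iff_of_true ?_ trivial
    intro t ht h1 h2
    exact ht.1.trans (h2 _ _ (psi_mid1 c a b)) (h1 _ _ (psi_mid2 c a b))
  · funext a b
    change B at a b
    apply propext
    constructor
    · rintro ⟨h1, h2⟩
      show a = b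
      calc a = (a ⊓ c) ⊔ (a ⊓ cᶜ) := by
              rw [← inf_sup_left, sup_compl_eq_top, inf_top_eq]
        _ = (b ⊓ c) ⊔ (b ⊓ cᶜ) := by rw [show a ⊓ c = b ⊓ c from h1, show a ⊓ cᶜ = b ⊓ cᶜ from h2]
        _ = b := by rw [← inf_sup_left, sup_compl_eq_top, inf_top_eq]
    · rintro rfl; exact ⟨rfl, rfl⟩
  · funext a b
    change B at a b
    apply propext
    refine iff_of_true ?_ ?_
    · exact ⟨(a ⊓ cᶜ) ⊔ (b ⊓ c), psi_mid1 c a b, psi_mid2 c a b⟩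
    · refine ⟨(a ⊓ c) ⊔ (b ⊓ cᶜ), ?_, ?_⟩
      · show a ⊓ c = ((a ⊓ c) ⊔ (b ⊓ cᶜ)) ⊓ c
        rw [inf_sup_right]; simp [inf_assoc]
      · show ((a ⊓ c) ⊔ (b ⊓ cᶜ)) ⊓ cᶜ = b ⊓ cᶜ
        rw [inf_sup_right]; simp [inf_assoc]

/-- `ψ_c ∨ θ = {(a,b) : θ (a ⊓ c) (b ⊓ c)}`. -/
lemma join_eq (hθ : (boolAlg B).IsCon θ) (c : B) :
    (boolAlg B).conJoin (psi c) θ = fun a b => θ (a ⊓ c) (b ⊓ c) := by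
  funext a b
  change B at a b
  apply propext
  constructor
  · intro hj
    exact hj _ (rho_con hθ c)
      (fun x y hxy => by change B at x y; show θ (x ⊓ c) (y ⊓ c); rw [show x ⊓ c = y ⊓ c from hxy]; exact hθ.1.refl _)
      (fun x y hxy => con_inf hθ hxy (hθ.1.refl c))
  · intro h t ht h1 h2
    have s1 : psi c a ((a ⊓ c) ⊔ (b ⊓ cᶜ)) := by
      show a ⊓ c = ((a ⊓ c) ⊔ (b ⊓ cᶜ)) ⊓ c
      rw [inf_sup_right]; simp [inf_assoc]
    have s2 : θ ((a ⊓ c) ⊔ (b ⊓ cᶜ)) b := by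
      have : θ ((a ⊓ c) ⊔ (b ⊓ cᶜ)) ((b ⊓ c) ⊔ (b ⊓ cᶜ)) :=
        con_sup hθ h (hθ.1.refl _)
      rwa [← inf_sup_left, sup_compl_eq_top, inf_top_eq] at this
    exact ht.1.trans (h1 _ _ s1) (h2 _ _ s2)

lemma q_inf (hθ : (boolAlg B).IsCon θ) (a b : B) :
    ((boolAlg B).quotAlg θ).interp .inf ![Quot.mk θ a, Quot.mk θ b] = Quot.mk θ (a ⊓ b) := by
  show Quot.mk θ ((Quot.mk θ a).out ⊓ (Quot.mk θ b).out) = Quot.mk θ (a ⊓ b)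
  exact (mk_eq_iff hθ).mpr (con_inf hθ (out_rel hθ a) (out_rel hθ b))

lemma qcon_inf (hθ : (boolAlg B).IsCon θ) {γ} (hγ : ((boolAlg B).quotAlg θ).IsCon γ)
    {a b a' b' : B}
    (h : γ (Quot.mk θ a) (Quot.mk θ b)) (h' : γ (Quot.mk θ a') (Quot.mk θ b')) :
    γ (Quot.mk θ (a ⊓ a')) (Quot.mk θ (b ⊓ b')) := by
  have := hγ.2 .inf ![Quot.mk θ a, Quot.mk θ a'] ![Quot.mk θ b, Quot.mk θ b']
    (by intro i; fin_cases i <;> simpa)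
  rwa [q_inf hθ, q_inf hθ] at this

/-- Every factor congruence of `B/θ` is of the form `{(a/θ,b/θ) : θ (a⊓c) (b⊓c)}`. -/
lemma fc_char (hθ : (boolAlg B).IsCon θ) {γ} (hγ : ((boolAlg B).quotAlg θ).IsFC γ) :
    ∃ c : B, ∀ a b : B, γ (Quot.mk θ a) (Quot.mk θ b) ↔ θ (a ⊓ c) (b ⊓ c) := by
  obtain ⟨hγc, γ', hγ'c, hjoin, hmeet, hperm⟩ := hγ
  obtain ⟨x, hx1, hx2⟩ := comp_all hγc hγ'c hperm hjoin (Quot.mk θ ⊥) (Quot.mk θ ⊤)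
  obtain ⟨c, rfl⟩ := Quot.exists_rep x
  refine ⟨c, fun a b => ⟨fun h => ?_, fun h => ?_⟩⟩
  · have h1 : γ (Quot.mk θ (a ⊓ c)) (Quot.mk θ (b ⊓ c)) :=
      qcon_inf hθ hγc h (hγc.1.refl _)
    have h2a : γ' (Quot.mk θ (a ⊓ ⊥)) (Quot.mk θ (a ⊓ c)) :=
      qcon_inf hθ hγ'c (hγ'c.1.refl _) hx1
    have h2b : γ' (Quot.mk θ (b ⊓ ⊥)) (Quot.mk θ (b ⊓ c)) :=
      qcon_inf hθ hγ'c (hγ'c.1.refl _) hx1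
    rw [inf_bot_eq] at h2a h2b
    have h2 : γ' (Quot.mk θ (a ⊓ c)) (Quot.mk θ (b ⊓ c)) :=
      hγ'c.1.trans (hγ'c.1.symm h2a) h2b
    have hd : Alg.delta ((boolAlg B).quotAlg θ) (Quot.mk θ (a ⊓ c)) (Quot.mk θ (b ⊓ c)) := by
      rw [← hmeet]; exact ⟨h1, h2⟩
    exact (mk_eq_iff hθ).mp hd
  · have h1a : γ (Quot.mk θ (a ⊓ c)) (Quot.mk θ (a ⊓ ⊤)) :=
      qcon_inf hθ hγc (hγc.1.refl _) hx2
    have h1b : γ (Quot.mk θ (b ⊓ c)) (Quot.mk θ (b ⊓ ⊤)) :=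
      qcon_inf hθ hγc (hγc.1.refl _) hx2
    rw [inf_top_eq] at h1a h1b
    have heq : Quot.mk θ (a ⊓ c) = Quot.mk θ (b ⊓ c) := (mk_eq_iff hθ).mpr h
    rw [← heq] at h1b
    exact hγc.1.trans (hγc.1.symm h1a) h1b

end FCLPAux

end FCLPAuxSect

/-- Every Boolean algebra has the FCLP: for every congruence `θ` of a Boolean
algebra `B`, the Boolean morphism `FC(θ) : FC(B) → FC(B/θ)` is surjective. -/
theorem stmt_7 (B : Type) [BooleanAlgebra B] (θ : B → B → Prop)
    (hθ : (boolAlg B).IsCon θ) : (boolAlg B).HasFCLP θ := by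
  intro γ hγ
  obtain ⟨c, hc⟩ := FCLPAux.fc_char hθ hγ
  refine ⟨FCLPAux.psi c, FCLPAux.psi_FC c, ?_⟩
  funext x y
  apply propext
  constructor
  · rintro ⟨a, b, rfl, rfl, hj⟩
    rw [FCLPAux.join_eq hθ c] at hj
    exact (hc a b).mpr hj
  · intro hxy
    obtain ⟨a, rfl⟩ := Quot.exists_rep x
    obtain ⟨b, rfl⟩ := Quot.exists_rep y
    refine ⟨a, b, rfl, rfl, ?_⟩
    rw [FCLPAux.join_eq hθ c]
    exact (hc a b).mp hxy
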